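/- Let X, Y, Z be finite sets, H and K be Hilbert spaces, and E = (E_{x,x',y,y'}) ∈ M_X ⊗ M_Y ⊗ B(H), F = (F_{y,y',z,z'}) ∈ M_Y ⊗ M_Z ⊗ B(K) be stochastic operator matrices. Define G^τ_{x,x',z,z'} = Σ_{y,y'∈Y} E_{x,x',y,y'} ⊗ F_{y,y',z,z'}. Then G^τ = (G^τ_{x,x',z,z'}) is a stochastic operator matrix in M_X ⊗ M_Z ⊗ B(H ⊗ K). -/

import Mathlib

open Matrix Kronecker ComplexOrder

/-- A stochastic operator matrix over `(X, A)` acting on `H = ℂ^n`: a family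
`E = (E_{x,x',a,a'})` of operators on `H` which is positive as a block operator
matrix (i.e. as an operator on `ℂ^{XA} ⊗ H`) and satisfies
`Tr_A E = I_X ⊗ I_H`, that is, `∑_a E_{x,x',a,a} = δ_{x,x'} I_H`. -/
def StochOpMat {X A n : Type*} [Fintype X] [Fintype A] [Fintype n] [DecidableEq X] [DecidableEq n]
    (E : X → X → A → A → Matrix n n ℂ) : Prop :=
  (Matrix.of fun p q : (X × A) × n => E p.1.1 q.1.1 p.1.2 q.1.2 p.2 q.2).PosSemidef ∧
    ∀ x x', (∑ a, E x x' a a) = if x = x' then (1 : Matrix n n ℂ) else 0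

/-- The "picking" matrix of a function `f : P → R`. -/
def pick {P R : Type*} [DecidableEq R] (f : P → R) : Matrix R P ℂ :=
  Matrix.of fun r p => if r = f p then 1 else 0

lemma pick_spec {P R : Type*} [Fintype P] [Fintype R] [DecidableEq R]
    (f g : P → R) (K : Matrix R R ℂ) :
    (pick f)ᴴ * K * pick g = K.submatrix f g := by
  ext p q
  simp [pick, Matrix.mul_apply, Matrix.conjTranspose_apply, apply_ite star,
    ite_mul, mul_ite, zero_mul, mul_zero, Finset.sum_ite_eq', Finset.sum_ite_eq]

lemma kron_psd {a b : Type*} [Fintype a] [Fintype b] [DecidableEq a] [DecidableEq b]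
    {A : Matrix a a ℂ} {B : Matrix b b ℂ} (hA : A.PosSemidef) (hB : B.PosSemidef) :
    (A ⊗ₖ B).PosSemidef := by
  obtain ⟨P, rfl⟩ : ∃ P, A = Pᴴ * P := by
    open scoped MatrixOrder in exact CStarAlgebra.nonneg_iff_eq_star_mul_self.mp hA.nonneg
  obtain ⟨Q, rfl⟩ : ∃ Q, B = Qᴴ * Q := by
    open scoped MatrixOrder in exact CStarAlgebra.nonneg_iff_eq_star_mul_self.mp hB.nonneg
  rw [Matrix.mul_kronecker_mul]
  have h : Pᴴ ⊗ₖ Qᴴ = (P ⊗ₖ Q)ᴴ := by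
    ext r s
    simp [Matrix.conjTranspose_apply]
  rw [h]
  exact Matrix.posSemidef_conjTranspose_mul_self _

lemma kronecker_sum_right {a b ι : Type*} [Fintype b]
    (A : Matrix a a ℂ) (s : Finset ι) (f : ι → Matrix b b ℂ) :
    A ⊗ₖ (∑ i ∈ s, f i) = ∑ i ∈ s, A ⊗ₖ f i := by
  ext r t
  simp [Matrix.sum_apply, Finset.mul_sum]

lemma sum_kronecker_left {a b ι : Type*} [Fintype a]
    (s : Finset ι) (f : ι → Matrix a a ℂ) (B : Matrix b b ℂ) :
    (∑ i ∈ s, f i) ⊗ₖ B = ∑ i ∈ s, f i ⊗ₖ B := by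
  ext r t
  simp [Matrix.sum_apply, Finset.sum_mul]

/-- the twisted composition
`G^τ_{x,x',z,z'} = Σ_{y,y'} E_{x,x',y,y'} ⊗ F_{y,y',z,z'}` of stochastic operator
matrices `E` (on `H`) and `F` (on `K`) is a stochastic operator matrix on `H ⊗ K`. -/
theorem stmt4 {X Y Z n m : Type*} [Fintype X] [Fintype Y] [Fintype Z] [Fintype n] [Fintype m] [DecidableEq n] [DecidableEq m]
    [DecidableEq X] [DecidableEq Y] [DecidableEq Z]
    (E : X → X → Y → Y → Matrix n n ℂ) (F : Y → Y → Z → Z → Matrix m m ℂ)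
    (hE : StochOpMat E) (hF : StochOpMat F) :
    StochOpMat (fun x x' z z' => ∑ y, ∑ y', (E x x' y y') ⊗ₖ (F y y' z z')) := by
  obtain ⟨hEpos, hEtr⟩ := hE
  obtain ⟨hFpos, hFtr⟩ := hF
  set Ehat : Matrix ((X × Y) × n) ((X × Y) × n) ℂ :=
    Matrix.of fun p q => E p.1.1 q.1.1 p.1.2 q.1.2 p.2 q.2 with hEhat
  set Fhat : Matrix ((Y × Z) × m) ((Y × Z) × m) ℂ :=
    Matrix.of fun p q => F p.1.1 q.1.1 p.1.2 q.1.2 p.2 q.2 with hFhat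
  have hK : (Ehat ⊗ₖ Fhat).PosSemidef := kron_psd hEpos hFpos
  constructor
  · -- positivity
    set ι : Y → ((X × Z) × n × m) → (((X × Y) × n) × ((Y × Z) × m)) :=
      fun y p => (((p.1.1, y), p.2.1), ((y, p.1.2), p.2.2)) with hι
    set A : Matrix (((X × Y) × n) × ((Y × Z) × m)) ((X × Z) × n × m) ℂ :=
      ∑ y, pick (ι y) with hA
    have hconj := hK.conjTranspose_mul_mul_same A
    have hM : (Matrix.of fun p q : (X × Z) × n × m =>
        (fun x x' z z' => ∑ y, ∑ y', (E x x' y y') ⊗ₖ (F y y' z z'))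
          p.1.1 q.1.1 p.1.2 q.1.2 p.2 q.2) = Aᴴ * (Ehat ⊗ₖ Fhat) * A := by
      rw [hA, Matrix.conjTranspose_sum, Matrix.sum_mul, Matrix.sum_mul]
      simp only [Matrix.mul_sum]
      ext p q
      simp only [Matrix.of_apply, Finset.sum_apply, Matrix.sum_apply]
      refine Finset.sum_congr rfl fun y _ => Finset.sum_congr rfl fun y' _ => ?_
      rw [pick_spec]
      simp [Matrix.submatrix_apply, Matrix.kroneckerMap_apply, hι, hEhat, hFhat]
    rw [hM]
    exact hconj
  · -- partial trace
    intro x x'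
    have key : ∀ y y', ∑ z, (E x x' y y') ⊗ₖ (F y y' z z)
        = (E x x' y y') ⊗ₖ (if y = y' then (1 : Matrix m m ℂ) else 0) := by
      intro y y'
      rw [← kronecker_sum_right, hFtr]
    calc ∑ z, ∑ y, ∑ y', (E x x' y y') ⊗ₖ (F y y' z z)
        = ∑ y, ∑ y', ∑ z, (E x x' y y') ⊗ₖ (F y y' z z) := by
          rw [Finset.sum_comm]
          exact Finset.sum_congr rfl fun y _ => Finset.sum_comm
      _ = ∑ y, ∑ y', (E x x' y y') ⊗ₖ (if y = y' then (1 : Matrix m m ℂ) else 0) := by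
          exact Finset.sum_congr rfl fun y _ => Finset.sum_congr rfl fun y' _ => key y y'
      _ = ∑ y, (E x x' y y) ⊗ₖ (1 : Matrix m m ℂ) := by
          refine Finset.sum_congr rfl fun y _ => ?_
          rw [Finset.sum_eq_single y]
          · simp
          · intro y' _ hy'
            simp [Ne.symm hy', Matrix.kronecker_zero]
          · intro h; exact absurd (Finset.mem_univ y) h
      _ = (∑ y, E x x' y y) ⊗ₖ (1 : Matrix m m ℂ) := (sum_kronecker_left _ _ _).symm
      _ = if x = x' then (1 : Matrix (n × m) (n × m) ℂ) else 0 := by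
          rw [hEtr]
          by_cases h : x = x' <;> simp [h, Matrix.one_kronecker_one, Matrix.zero_kronecker]
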